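/- Let G_0(t, x) = exp(i x²/(4t)) / √(4iπt) for t > 0 and x ∈ ℝ, where √ denotes the principal branch of the complex square root. Let τ, ω, x ∈ ℝ and t > 0 be such that ν := 1 + 2τt ≠ 0. Then the symmetric improper integral lim_{R → +∞} ∫_{−R}^{R} exp( i (ω + (τ/2) y) y ) · G_0(t, x − y) dy exists and equals (1/√ν) · exp( (i/ν) ( (ω + (τ/2) x) x − ω² t ) ), where √ν is the principal square root of ν (so that √ν = i√|ν| when ν < 0). -/

import Mathlib

open MeasureTheory intervalIntegral Filter Complex Topology

lemma norm_cexp_le_one {b : ℂ} (hre : b.re ≤ 0) (y : ℝ) :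
    ‖Complex.exp (b * (y : ℂ) ^ 2)‖ ≤ 1 := by
  rw [Complex.norm_exp]
  have h : (b * (y : ℂ) ^ 2).re = b.re * y ^ 2 := by
    simp [Complex.mul_re, ← Complex.ofReal_pow]
  rw [h]
  exact Real.exp_le_one_iff.mpr (mul_nonpos_of_nonpos_of_nonneg hre (sq_nonneg y))

lemma fresnel_hasDeriv {b : ℂ} (hb : b ≠ 0) {y : ℝ} (hy : y ≠ 0) :
    HasDerivAt (fun y : ℝ => Complex.exp (b * (y : ℂ) ^ 2) / (2 * b * y))
      (Complex.exp (b * (y : ℂ) ^ 2) - Complex.exp (b * (y : ℂ) ^ 2) / (2 * b * (y : ℂ) ^ 2)) y := by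
  have h1 : HasDerivAt (fun y : ℝ => (y : ℂ)) 1 y := Complex.ofRealCLM.hasDerivAt
  have h2 : HasDerivAt (fun y : ℝ => b * ((y : ℂ) * (y : ℂ))) (b * (1 * y + y * 1)) y :=
    (h1.mul h1).const_mul b
  simp only [← pow_two] at h2
  have h3 : HasDerivAt (fun y : ℝ => Complex.exp (b * (y : ℂ) ^ 2))
      (Complex.exp (b * (y : ℂ) ^ 2) * (b * (1 * y + y * 1))) y := h2.cexp
  have h4 : HasDerivAt (fun y : ℝ => 2 * b * (y : ℂ)) (2 * b) y := by
    simpa using h1.const_mul (2 * b)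
  have hyC : (y : ℂ) ≠ 0 := Complex.ofReal_ne_zero.mpr hy
  have h5 : (2 * b * (y : ℂ)) ≠ 0 := by simp [hb, hyC]
  have h6 := h3.div h4 h5
  refine h6.congr_deriv ?_
  field_simp
  ring

lemma fresnel_tail {b : ℂ} (hre : b.re ≤ 0) (hb : b ≠ 0) {R S : ℝ} (hR : 0 < R) (hRS : R ≤ S) :
    ‖∫ y in R..S, Complex.exp (b * (y : ℂ) ^ 2)‖ ≤ 2 / (‖b‖ * R) := by
  have hbabs : 0 < ‖b‖ := norm_pos_iff.mpr hb
  have hS : 0 < S := lt_of_lt_of_le hR hRS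
  have huIcc : Set.uIcc R S = Set.Icc R S := Set.uIcc_of_le hRS
  have hne : ∀ y ∈ Set.uIcc R S, y ≠ 0 := by
    intro y hy; rw [huIcc] at hy; exact ne_of_gt (lt_of_lt_of_le hR hy.1)
  have hc1 : ContinuousOn (fun y : ℝ => Complex.exp (b * (y : ℂ) ^ 2)) (Set.uIcc R S) :=
    (Complex.continuous_exp.comp (by continuity)).continuousOn
  have hc2 : ContinuousOn (fun y : ℝ => Complex.exp (b * (y : ℂ) ^ 2) / (2 * b * (y : ℂ) ^ 2))
      (Set.uIcc R S) := by
    apply hc1.div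
    · exact (by continuity : Continuous fun y : ℝ => 2 * b * (y : ℂ) ^ 2).continuousOn
    · intro y hy
      have := hne y hy
      simp [hb, Complex.ofReal_ne_zero.mpr this]
  have hint1 : IntervalIntegrable (fun y : ℝ => Complex.exp (b * (y : ℂ) ^ 2)) volume R S :=
    hc1.intervalIntegrable
  have hint2 : IntervalIntegrable (fun y : ℝ => Complex.exp (b * (y : ℂ) ^ 2) / (2 * b * (y : ℂ) ^ 2))
      volume R S := hc2.intervalIntegrable
  have hftc : ∫ y in R..S, (Complex.exp (b * (y : ℂ) ^ 2) - Complex.exp (b * (y : ℂ) ^ 2) / (2 * b * (y : ℂ) ^ 2))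
      = Complex.exp (b * (S : ℂ) ^ 2) / (2 * b * S) - Complex.exp (b * (R : ℂ) ^ 2) / (2 * b * R) := by
    apply intervalIntegral.integral_eq_sub_of_hasDerivAt
    · intro y hy; exact fresnel_hasDeriv hb (hne y hy)
    · exact hint1.sub hint2
  have hsplit : ∫ y in R..S, Complex.exp (b * (y : ℂ) ^ 2)
      = (Complex.exp (b * (S : ℂ) ^ 2) / (2 * b * S) - Complex.exp (b * (R : ℂ) ^ 2) / (2 * b * R))
        + ∫ y in R..S, Complex.exp (b * (y : ℂ) ^ 2) / (2 * b * (y : ℂ) ^ 2) := by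
    rw [← hftc, ← intervalIntegral.integral_add (hint1.sub hint2) hint2]
    simp
  rw [hsplit]
  set c := 2 * ‖b‖ with hc
  have hcpos : 0 < c := by positivity
  -- endpoint bounds
  have hend : ∀ s : ℝ, 0 < s → ‖Complex.exp (b * (s : ℂ) ^ 2) / (2 * b * s)‖ ≤ (c * s)⁻¹ := by
    intro s hs
    rw [norm_div]
    have hden : ‖(2 * b * (s : ℂ))‖ = c * s := by
      simp [map_mul, Complex.norm_real, abs_of_pos hs, hc]
    rw [hden, div_eq_mul_inv]
    simpa using mul_le_mul_of_nonneg_right (norm_cexp_le_one hre s)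
      (inv_nonneg.mpr (le_of_lt (mul_pos hcpos hs)))
  -- integral of the bound
  have hderivb : ∀ y ∈ Set.uIcc R S, HasDerivAt (fun y : ℝ => -(c * y)⁻¹) ((c * y ^ 2)⁻¹) y := by
    intro y hy
    have hy0 : y ≠ 0 := hne y hy
    have h := (((hasDerivAt_id y).const_mul c).inv (by simp [ne_of_gt hcpos, hy0] : c * y ≠ 0)).neg
    refine h.congr_deriv ?_
    simp only [id]
    field_simp
  have hbint : IntervalIntegrable (fun y : ℝ => (c * y ^ 2)⁻¹) volume R S := by
    apply ContinuousOn.intervalIntegrable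
    apply ContinuousOn.inv₀
    · exact (by continuity : Continuous fun y : ℝ => c * y ^ 2).continuousOn
    · intro y hy
      exact mul_ne_zero (ne_of_gt hcpos) (pow_ne_zero 2 (hne y hy))
  have hval : (∫ y in R..S, (c * y ^ 2)⁻¹) = (c * R)⁻¹ - (c * S)⁻¹ := by
    rw [intervalIntegral.integral_eq_sub_of_hasDerivAt hderivb hbint]
    ring
  have hnorm2 : ‖∫ y in R..S, Complex.exp (b * (y : ℂ) ^ 2) / (2 * b * (y : ℂ) ^ 2)‖
      ≤ (c * R)⁻¹ - (c * S)⁻¹ := by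
    have hle : ∀ᵐ (y : ℝ) ∂(volume.restrict (Set.uIoc R S)),
        ‖Complex.exp (b * (y : ℂ) ^ 2) / (2 * b * (y : ℂ) ^ 2)‖ ≤ (c * y ^ 2)⁻¹ := by
      apply (ae_restrict_iff' measurableSet_uIoc).mpr
      apply Filter.Eventually.of_forall
      intro y hy
      have hy0 : 0 < y := by
        rw [Set.uIoc_of_le hRS] at hy
        exact lt_of_lt_of_le hR (le_of_lt hy.1)
      rw [norm_div]
      have hden : ‖(2 * b * (y : ℂ) ^ 2)‖ = c * y ^ 2 := by
        simp [map_mul, map_pow, Complex.norm_real, _root_.sq_abs, hc]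
      rw [hden, div_eq_mul_inv]
      simpa using mul_le_mul_of_nonneg_right (norm_cexp_le_one hre y)
        (inv_nonneg.mpr (le_of_lt (mul_pos hcpos (pow_pos hy0 2))))
    calc ‖∫ y in R..S, Complex.exp (b * (y : ℂ) ^ 2) / (2 * b * (y : ℂ) ^ 2)‖
        ≤ |∫ y in R..S, (c * y ^ 2)⁻¹| := intervalIntegral.norm_integral_le_abs_of_norm_le hle hbint
      _ = (c * R)⁻¹ - (c * S)⁻¹ := by
          rw [hval, _root_.abs_of_nonneg]
          have : (c * S)⁻¹ ≤ (c * R)⁻¹ := by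
            apply inv_anti₀ (by positivity)
            exact mul_le_mul_of_nonneg_left hRS (le_of_lt hcpos)
          linarith
  have h1 := hend S hS
  have h2 := hend R hR
  have hfinal : (c * S)⁻¹ + (c * R)⁻¹ + ((c * R)⁻¹ - (c * S)⁻¹) ≤ 2 / (‖b‖ * R) := by
    rw [hc]
    rw [div_eq_mul_inv]
    have : (2 * ‖b‖ * R)⁻¹ = 2⁻¹ * (‖b‖ * R)⁻¹ := by
      rw [mul_assoc, mul_inv]
    rw [this]
    have hpos : 0 < (‖b‖ * R)⁻¹ := by positivity
    linarith
  calc ‖_ + _‖ ≤ ‖Complex.exp (b * (S : ℂ) ^ 2) / (2 * b * S) - Complex.exp (b * (R : ℂ) ^ 2) / (2 * b * R)‖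
        + ‖∫ y in R..S, Complex.exp (b * (y : ℂ) ^ 2) / (2 * b * (y : ℂ) ^ 2)‖ := norm_add_le _ _
    _ ≤ ((c * S)⁻¹ + (c * R)⁻¹) + ((c * R)⁻¹ - (c * S)⁻¹) := by
        gcongr
        exact le_trans (norm_sub_le _ _) (by linarith)
    _ ≤ 2 / (‖b‖ * R) := by linarith [hfinal]

lemma fresnel_symm_bound {a : ℝ} (ha : a ≠ 0) {b : ℂ} (him : b.im = a) (hre : b.re ≤ 0) {R S : ℝ}
    (hR : 0 < R) (hRS : R ≤ S) :
    ‖(∫ y in (-S)..S, Complex.exp (b * (y : ℂ) ^ 2)) - ∫ y in (-R)..R, Complex.exp (b * (y : ℂ) ^ 2)‖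
      ≤ 4 / (|a| * R) := by
  have hb : b ≠ 0 := fun h => ha (by simp [h] at him; exact him.symm)
  have habs : |a| ≤ ‖b‖ := him ▸ Complex.abs_im_le_norm b
  have hapos : 0 < |a| := abs_pos.mpr ha
  have hcont : Continuous (fun y : ℝ => Complex.exp (b * (y : ℂ) ^ 2)) :=
    Complex.continuous_exp.comp (by continuity)
  have hii : ∀ u v : ℝ, IntervalIntegrable (fun y : ℝ => Complex.exp (b * (y : ℂ) ^ 2)) volume u v :=
    fun u v => hcont.intervalIntegrable u v
  have hsplit : (∫ y in (-S)..S, Complex.exp (b * (y : ℂ) ^ 2))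
      = (∫ y in (-S)..(-R), Complex.exp (b * (y : ℂ) ^ 2))
        + (∫ y in (-R)..R, Complex.exp (b * (y : ℂ) ^ 2))
        + (∫ y in R..S, Complex.exp (b * (y : ℂ) ^ 2)) := by
    rw [intervalIntegral.integral_add_adjacent_intervals (hii (-S) (-R)) (hii (-R) R),
      intervalIntegral.integral_add_adjacent_intervals (hii (-S) R) (hii R S)]
  have hneg : (∫ y in (-S)..(-R), Complex.exp (b * (y : ℂ) ^ 2))
      = ∫ y in R..S, Complex.exp (b * (y : ℂ) ^ 2) := by
    rw [← intervalIntegral.integral_comp_neg (fun y : ℝ => Complex.exp (b * (y : ℂ) ^ 2))]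
    congr 1
    ext y
    push_cast
    ring_nf
  have htail := fresnel_tail hre hb hR hRS
  have hle : 2 / (‖b‖ * R) ≤ 2 / (|a| * R) := by
    apply div_le_div_of_nonneg_left (by norm_num) (by positivity)
    exact mul_le_mul_of_nonneg_right habs (le_of_lt hR)
  calc ‖(∫ y in (-S)..S, Complex.exp (b * (y : ℂ) ^ 2)) - ∫ y in (-R)..R, Complex.exp (b * (y : ℂ) ^ 2)‖
      = ‖(∫ y in (-S)..(-R), Complex.exp (b * (y : ℂ) ^ 2)) + ∫ y in R..S, Complex.exp (b * (y : ℂ) ^ 2)‖ := by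
        rw [hsplit]; congr 1; ring
    _ ≤ ‖(∫ y in (-S)..(-R), Complex.exp (b * (y : ℂ) ^ 2))‖ + ‖∫ y in R..S, Complex.exp (b * (y : ℂ) ^ 2)‖ :=
        norm_add_le _ _
    _ ≤ 2 / (|a| * R) + 2 / (|a| * R) := by
        rw [hneg]
        exact add_le_add (le_trans htail hle) (le_trans htail hle)
    _ = 4 / (|a| * R) := by ring

lemma fresnel_eps_bound {a : ℝ} (ha : a ≠ 0) {ε : ℝ} (hε : 0 < ε) {R : ℝ} (hR : 0 < R) :
    ‖(∫ y in (-R)..R, Complex.exp (((a : ℂ) * Complex.I - (ε : ℂ)) * (y : ℂ) ^ 2))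
      - ((Real.pi : ℂ) / ((ε : ℂ) - (a : ℂ) * Complex.I)) ^ ((1:ℂ)/2)‖ ≤ 4 / (|a| * R) := by
  set b : ℂ := (a : ℂ) * Complex.I - (ε : ℂ) with hbdef
  have him : b.im = a := by simp [hbdef]
  have hre : b.re = -ε := by simp [hbdef]
  have hw : (0:ℝ) < (-b).re := by simp [hre, hε]
  have hgauss : ∫ x : ℝ, Complex.exp (b * (x : ℂ) ^ 2) = ((Real.pi : ℂ) / (-b)) ^ ((1:ℂ)/2) := by
    have := integral_gaussian_complex hw
    simp only [neg_neg] at this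
    rw [← this]
  have hint : Integrable (fun x : ℝ => Complex.exp (b * (x : ℂ) ^ 2)) := by
    have := integrable_cexp_neg_mul_sq hw
    simpa using this
  have htend : Tendsto (fun S : ℝ => ∫ y in (-S)..S, Complex.exp (b * (y : ℂ) ^ 2)) atTop
      (𝓝 (∫ x : ℝ, Complex.exp (b * (x : ℂ) ^ 2))) :=
    intervalIntegral_tendsto_integral hint tendsto_neg_atTop_atBot tendsto_id
  have hev : ∀ᶠ S in (atTop : Filter ℝ),
      ‖(∫ y in (-S)..S, Complex.exp (b * (y : ℂ) ^ 2)) - ∫ y in (-R)..R, Complex.exp (b * (y : ℂ) ^ 2)‖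
        ≤ 4 / (|a| * R) := by
    filter_upwards [eventually_ge_atTop R] with S hS
    exact fresnel_symm_bound ha him (by rw [hre]; linarith) hR hS
  have hlim := le_of_tendsto ((htend.sub tendsto_const_nhds).norm) hev
  rw [hgauss] at hlim
  have hrw : ((Real.pi : ℂ) / (-b)) = ((Real.pi : ℂ) / ((ε : ℂ) - (a : ℂ) * Complex.I)) := by
    rw [hbdef]; ring_nf
  rw [hrw] at hlim
  rw [← norm_neg]
  simpa [neg_sub] using hlim

lemma fresnel_symm {a : ℝ} (ha : a ≠ 0) :
    Tendsto (fun R : ℝ => ∫ y in (-R)..R, Complex.exp ((a : ℂ) * Complex.I * (y : ℂ) ^ 2)) atTop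
      (𝓝 (((Real.pi : ℂ) / (-((a : ℂ) * Complex.I))) ^ ((1:ℂ)/2))) := by
  have hapos : 0 < |a| := abs_pos.mpr ha
  have key : ∀ R : ℝ, 0 < R →
      ‖(∫ y in (-R)..R, Complex.exp ((a : ℂ) * Complex.I * (y : ℂ) ^ 2))
        - ((Real.pi : ℂ) / (-((a : ℂ) * Complex.I))) ^ ((1:ℂ)/2)‖ ≤ 4 / (|a| * R) := by
    intro R hR
    -- ε → 0⁺ limits
    have h1 : Tendsto (fun ε : ℝ => ∫ y in (-R)..R,
          Complex.exp (((a : ℂ) * Complex.I - (ε : ℂ)) * (y : ℂ) ^ 2)) (𝓝[>] (0:ℝ))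
        (𝓝 (∫ y in (-R)..R, Complex.exp ((a : ℂ) * Complex.I * (y : ℂ) ^ 2))) := by
      apply intervalIntegral.tendsto_integral_filter_of_dominated_convergence (fun _ => (1:ℝ))
      · apply Filter.Eventually.of_forall
        intro ε
        exact (Complex.continuous_exp.comp (by continuity)).aestronglyMeasurable
      · filter_upwards [self_mem_nhdsWithin] with ε (hε : 0 < ε)
        apply Filter.Eventually.of_forall
        intro y _
        have hre : ((a : ℂ) * Complex.I - (ε : ℂ)).re ≤ 0 := by simp [le_of_lt hε]
        exact norm_cexp_le_one hre y
      · exact intervalIntegrable_const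
      · apply Filter.Eventually.of_forall
        intro y _
        have hc : Continuous (fun ε : ℝ =>
            Complex.exp (((a : ℂ) * Complex.I - (ε : ℂ)) * (y : ℂ) ^ 2)) :=
          Complex.continuous_exp.comp (by continuity)
        have h0 : Tendsto (fun ε : ℝ =>
            Complex.exp (((a : ℂ) * Complex.I - (ε : ℂ)) * (y : ℂ) ^ 2)) (𝓝[>] (0:ℝ))
            (𝓝 (Complex.exp (((a : ℂ) * Complex.I - ((0:ℝ) : ℂ)) * (y : ℂ) ^ 2))) :=
          (hc.tendsto 0).mono_left nhdsWithin_le_nhds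
        simpa using h0
    have h2 : Tendsto (fun ε : ℝ => ((Real.pi : ℂ) / ((ε : ℂ) - (a : ℂ) * Complex.I)) ^ ((1:ℂ)/2))
        (𝓝[>] (0:ℝ)) (𝓝 (((Real.pi : ℂ) / (-((a : ℂ) * Complex.I))) ^ ((1:ℂ)/2))) := by
      have hden : Continuous (fun ε : ℝ => (ε : ℂ) - (a : ℂ) * Complex.I) := by continuity
      have hne : ((0:ℝ) : ℂ) - (a : ℂ) * Complex.I ≠ 0 := by
        simp [Complex.ext_iff, ha]
      have hbase : ContinuousAt (fun ε : ℝ => (Real.pi : ℂ) / ((ε : ℂ) - (a : ℂ) * Complex.I)) 0 :=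
        (continuousAt_const.div (hden.continuousAt) hne)
      have hval : (Real.pi : ℂ) / (((0:ℝ) : ℂ) - (a : ℂ) * Complex.I)
          = (Real.pi : ℂ) / (-((a : ℂ) * Complex.I)) := by norm_num
      have hslit : (Real.pi : ℂ) / (-((a : ℂ) * Complex.I)) ∈ Complex.slitPlane := by
        rw [Complex.mem_slitPlane_iff]
        right
        have him : ((Real.pi : ℂ) / (-((a : ℂ) * Complex.I))).im = Real.pi / a := by
          simp [Complex.div_im, Complex.normSq_apply]
          field_simp
        rw [him]
        exact div_ne_zero Real.pi_ne_zero ha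
      have hcomp : ContinuousAt (fun ε : ℝ =>
          ((Real.pi : ℂ) / ((ε : ℂ) - (a : ℂ) * Complex.I)) ^ ((1:ℂ)/2)) 0 :=
        hbase.cpow continuousAt_const (by rw [hval]; exact hslit)
      have h2' := (hcomp.tendsto).mono_left (nhdsWithin_le_nhds (s := Set.Ioi (0:ℝ)))
      rw [show ((Real.pi : ℂ) / (((0:ℝ) : ℂ) - (a : ℂ) * Complex.I)) ^ ((1:ℂ)/2)
          = ((Real.pi : ℂ) / (-((a : ℂ) * Complex.I))) ^ ((1:ℂ)/2) from by rw [hval]] at h2'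
      exact h2'
    have h3 := (h1.sub h2).norm
    apply le_of_tendsto h3
    filter_upwards [self_mem_nhdsWithin] with ε (hε : 0 < ε)
    exact fresnel_eps_bound ha hε hR
  -- squeeze
  rw [← tendsto_sub_nhds_zero_iff]
  apply squeeze_zero_norm' (a := fun R : ℝ => 4 / (|a| * R))
  · filter_upwards [eventually_gt_atTop (0:ℝ)] with R hR
    exact key R hR
  · have hmul : Tendsto (fun R : ℝ => |a| * R) atTop atTop :=
      Tendsto.const_mul_atTop hapos tendsto_id
    exact Tendsto.div_atTop tendsto_const_nhds hmul

lemma fresnel_shift {a : ℝ} (ha : a ≠ 0) (d : ℝ) :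
    Tendsto (fun R : ℝ => ∫ y in (-R + d)..(R + d), Complex.exp ((a : ℂ) * Complex.I * (y : ℂ) ^ 2)) atTop
      (𝓝 (((Real.pi : ℂ) / (-((a : ℂ) * Complex.I))) ^ ((1:ℂ)/2))) := by
  set f : ℝ → ℂ := fun y => Complex.exp ((a : ℂ) * Complex.I * (y : ℂ) ^ 2) with hf
  have hcont : Continuous f := Complex.continuous_exp.comp (by continuity)
  have hii : ∀ u v : ℝ, IntervalIntegrable f volume u v := fun u v => hcont.intervalIntegrable u v
  set F : ℝ → ℂ := fun s => ∫ y in (0:ℝ)..s, f y with hF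
  have hodd : ∀ s : ℝ, F (-s) = -F s := by
    intro s
    have h1 : (∫ y in (0:ℝ)..s, f (-y)) = ∫ y in (-s)..(-(0:ℝ)), f y :=
      intervalIntegral.integral_comp_neg f
    have h2 : ∀ y : ℝ, f (-y) = f y := by
      intro y; simp only [hf]; norm_num
    simp only [h2, neg_zero] at h1
    show (∫ y in (0:ℝ)..(-s), f y) = -∫ y in (0:ℝ)..s, f y
    rw [h1, intervalIntegral.integral_symm]
  have hsym : ∀ R : ℝ, (∫ y in (-R)..R, f y) = 2 * F R := by
    intro R
    have := intervalIntegral.integral_add_adjacent_intervals (hii (-R) 0) (hii 0 R)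
    rw [← this]
    have hneg : (∫ y in (-R)..(0:ℝ), f y) = F R := by
      have h1 : (∫ y in (0:ℝ)..R, f (-y)) = ∫ y in (-R)..(-(0:ℝ)), f y :=
        intervalIntegral.integral_comp_neg f
      have h2 : ∀ y : ℝ, f (-y) = f y := by intro y; simp only [hf]; norm_num
      simp only [h2, neg_zero] at h1
      rw [hF, ← h1]
    rw [hneg]
    ring
  -- F tends to L/2
  set L : ℂ := ((Real.pi : ℂ) / (-((a : ℂ) * Complex.I))) ^ ((1:ℂ)/2) with hL
  have hFlim : Tendsto F atTop (𝓝 (L / 2)) := by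
    have h := fresnel_symm ha
    have h2 : Tendsto (fun R : ℝ => (1/2 : ℂ) * ∫ y in (-R)..R, f y) atTop (𝓝 ((1/2 : ℂ) * L)) :=
      h.const_mul _
    have : (fun R : ℝ => (1/2 : ℂ) * ∫ y in (-R)..R, f y) = F := by
      funext R
      rw [hsym R]
      ring
    rw [this] at h2
    convert h2 using 2
    ring
  -- assemble
  have hdecomp : ∀ R : ℝ, (∫ y in (-R + d)..(R + d), f y) = F (R + d) - F (-R + d) := by
    intro R
    have h1 := intervalIntegral.integral_add_adjacent_intervals (hii (-R + d) 0) (hii 0 (R + d))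
    rw [← h1, hF]
    rw [show (∫ y in (-R + d)..(0:ℝ), f y) = -∫ y in (0:ℝ)..(-R + d), f y from
      (intervalIntegral.integral_symm _ _)]
    ring
  have ht1 : Tendsto (fun R : ℝ => F (R + d)) atTop (𝓝 (L / 2)) :=
    hFlim.comp (tendsto_atTop_add_const_right atTop d tendsto_id)
  have ht2 : Tendsto (fun R : ℝ => F (-R + d)) atTop (𝓝 (-(L / 2))) := by
    have hneg : Tendsto (fun R : ℝ => -R + d) atTop atBot := by
      apply tendsto_atBot_add_const_right
      exact tendsto_neg_atTop_atBot
    have hFbot : Tendsto F atBot (𝓝 (-(L / 2))) := by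
      have : Tendsto (fun s : ℝ => -F (-s)) atBot (𝓝 (-(L/2))) := by
        have h' : Tendsto (fun s : ℝ => F (-s)) atBot (𝓝 (L/2)) :=
          hFlim.comp tendsto_neg_atBot_atTop
        exact h'.neg
      have heq : (fun s : ℝ => -F (-s)) = F := by
        funext s
        rw [hodd s]
        ring
      rwa [heq] at this
    exact hFbot.comp hneg
  have := ht1.sub ht2
  simp only [sub_neg_eq_add] at this
  have hfin : L / 2 + L / 2 = L := by ring
  rw [hfin] at this
  have heq : (fun R : ℝ => F (R + d) - F (-R + d))
      = fun R : ℝ => ∫ y in (-R + d)..(R + d), f y := by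
    funext R; rw [hdecomp R]
  rwa [heq] at this

lemma sqrt_const_ident {ν t : ℝ} (ht : 0 < t) (hν : ν ≠ 0) :
    ((Real.pi : ℂ) / (-(((ν / (4*t) : ℝ) : ℂ) * Complex.I))) ^ ((1:ℂ)/2) * ((ν : ℝ) : ℂ) ^ ((1:ℂ)/2)
      = (4 * (Real.pi : ℂ) * Complex.I * (t : ℂ)) ^ ((1:ℂ)/2) := by
  have hπ : (0:ℝ) < Real.pi := Real.pi_pos
  have ht' : t ≠ 0 := ne_of_gt ht
  have htC : (t:ℂ) ≠ 0 := Complex.ofReal_ne_zero.mpr ht'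
  have hνC : ((ν:ℝ):ℂ) ≠ 0 := Complex.ofReal_ne_zero.mpr hν
  set c : ℝ := 4 * Real.pi * t / ν with hc
  have hcne : c ≠ 0 := by
    rw [hc]
    exact div_ne_zero (by positivity) hν
  -- u = c * I
  have hu : (Real.pi : ℂ) / (-(((ν / (4*t) : ℝ) : ℂ) * Complex.I)) = ((c : ℝ) : ℂ) * Complex.I := by
    rw [div_eq_iff (by
      simp only [neg_ne_zero, mul_ne_zero_iff]
      exact ⟨by push_cast; exact div_ne_zero hνC (by norm_num [htC]), Complex.I_ne_zero⟩)]
    rw [hc]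
    push_cast
    field_simp
    ring_nf
    simp [Complex.I_sq]
  rw [hu]
  set w : ℂ := (((c : ℝ) : ℂ) * Complex.I) ^ ((1:ℂ)/2) * ((ν : ℝ) : ℂ) ^ ((1:ℂ)/2) with hw
  have hhalf : ((1:ℂ)/2) = ((2:ℕ) : ℂ)⁻¹ := by norm_num
  have hsq : w ^ (2:ℕ) = 4 * (Real.pi : ℂ) * Complex.I * (t : ℂ) := by
    rw [hw, mul_pow, hhalf, Complex.cpow_nat_inv_pow _ (two_ne_zero),
      Complex.cpow_nat_inv_pow _ (two_ne_zero)]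
    rw [hc]
    push_cast
    field_simp
  have hwre : 0 < w.re := by
    rcases lt_or_gt_of_ne hν with hneg | hpos
    · -- ν < 0, c < 0
      have hcneg : c < 0 := by
        rw [hc]
        apply div_neg_of_pos_of_neg (by positivity) hneg
      have him_u : (((c : ℝ) : ℂ) * Complex.I).im = c := by simp
      have hre_u : (((c : ℝ) : ℂ) * Complex.I).re = 0 := by simp
      have habs_u : ‖(((c : ℝ) : ℂ) * Complex.I)‖ = |c| := by
        simp [map_mul, Complex.norm_real]
      have h1 : ((((c : ℝ) : ℂ) * Complex.I) ^ ((1:ℂ)/2)).re = Real.sqrt (|c| / 2) := by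
        rw [hhalf, show (((2:ℕ):ℂ))⁻¹ = (2⁻¹ : ℂ) by norm_num, Complex.cpow_inv_two_re,
          habs_u, hre_u, add_zero]
      have h2 : ((((c : ℝ) : ℂ) * Complex.I) ^ ((1:ℂ)/2)).im = -Real.sqrt (|c| / 2) := by
        rw [hhalf, show (((2:ℕ):ℂ))⁻¹ = (2⁻¹ : ℂ) by norm_num,
          Complex.cpow_inv_two_im_eq_neg_sqrt (by rw [him_u]; exact hcneg),
          habs_u, hre_u, sub_zero]
      have h3 : (((ν : ℝ) : ℂ) ^ ((1:ℂ)/2)).re = 0 := by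
        rw [hhalf, show (((2:ℕ):ℂ))⁻¹ = (2⁻¹ : ℂ) by norm_num, Complex.cpow_inv_two_re]
        simp [Complex.norm_real, abs_of_neg hneg]
      have h4 : (((ν : ℝ) : ℂ) ^ ((1:ℂ)/2)).im = Real.sqrt (-ν) := by
        rw [hhalf, show (((2:ℕ):ℂ))⁻¹ = (2⁻¹ : ℂ) by norm_num,
          Complex.cpow_inv_two_im_eq_sqrt (by simp : (0:ℝ) ≤ (((ν : ℝ) : ℂ)).im)]
        simp [Complex.norm_real, abs_of_neg hneg]
        rw [show -ν - ν = (-ν)*2 by ring, Real.sqrt_mul (by linarith : (0:ℝ) ≤ -ν)]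
        have h2ne : Real.sqrt 2 ≠ 0 := by positivity
        field_simp
      rw [hw, Complex.mul_re, h1, h2, h3, h4]
      have : 0 < Real.sqrt (|c| / 2) := Real.sqrt_pos.mpr (by positivity)
      have h5 : 0 < Real.sqrt (-ν) := Real.sqrt_pos.mpr (by linarith)
      nlinarith
    · -- ν > 0, c > 0
      have hcpos : 0 < c := by
        rw [hc]; positivity
      have h1 : ((((c : ℝ) : ℂ) * Complex.I) ^ ((1:ℂ)/2)).re = Real.sqrt (|c| / 2) := by
        rw [hhalf, show (((2:ℕ):ℂ))⁻¹ = (2⁻¹ : ℂ) by norm_num, Complex.cpow_inv_two_re]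
        simp [map_mul, Complex.norm_real]
      have h2 : (((ν : ℝ) : ℂ) ^ ((1:ℂ)/2)).re = Real.sqrt ν := by
        rw [hhalf, show (((2:ℕ):ℂ))⁻¹ = (2⁻¹ : ℂ) by norm_num, Complex.cpow_inv_two_re]
        simp [Complex.norm_real, abs_of_pos hpos]
      have h3 : (((ν : ℝ) : ℂ) ^ ((1:ℂ)/2)).im = 0 := by
        rw [hhalf, show (((2:ℕ):ℂ))⁻¹ = (2⁻¹ : ℂ) by norm_num,
          Complex.cpow_inv_two_im_eq_sqrt (by simp : (0:ℝ) ≤ (((ν : ℝ) : ℂ)).im)]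
        simp [Complex.norm_real, abs_of_pos hpos]
      rw [hw, Complex.mul_re, h1, h2, h3]
      have h4 : 0 < Real.sqrt (|c| / 2) := Real.sqrt_pos.mpr (by positivity)
      have h5 : 0 < Real.sqrt ν := Real.sqrt_pos.mpr hpos
      nlinarith
  rw [← hsq, hhalf, show (((2:ℕ):ℂ))⁻¹ = (2⁻¹ : ℂ) by norm_num]
  exact (Complex.sq_cpow_two_inv hwre).symm

/-- (Lemma 4.1, evolution of chirps) For `ν = 1 + 2τt ≠ 0`, the symmetric improper
Fresnel-type integral of the chirp `y ↦ exp(i(ω + (τ/2)y)y)` against the free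
Schrödinger propagator `G_0(t, x - y) = exp(i(x-y)²/(4t))/√(4iπt)` exists and equals
`ν^{-1/2} exp((i/ν)((ω + (τ/2)x)x - ω²t))`, with principal square roots. -/
theorem statement_14 (τ ω x t : ℝ) (ht : 0 < t) (hν : 1 + 2 * τ * t ≠ 0) :
    Filter.Tendsto
      (fun Rad : ℝ => ∫ y in (-Rad)..Rad,
        Complex.exp (Complex.I * (((ω + τ / 2 * y) * y : ℝ) : ℂ)) *
          (Complex.exp (Complex.I * (((x - y) ^ 2 : ℝ) : ℂ) / (4 * (t : ℂ))) /
            (4 * (Real.pi : ℂ) * Complex.I * (t : ℂ)) ^ ((1 : ℂ) / 2)))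
      Filter.atTop
      (nhds ((((1 + 2 * τ * t : ℝ) : ℂ) ^ ((1 : ℂ) / 2))⁻¹ *
        Complex.exp ((Complex.I / ((1 + 2 * τ * t : ℝ) : ℂ)) *
          (((ω + τ / 2 * x) * x - ω ^ 2 * t : ℝ) : ℂ)))) := by
  set ν : ℝ := 1 + 2 * τ * t with hνdef
  have ht' : t ≠ 0 := ne_of_gt ht
  have htC : (t : ℂ) ≠ 0 := Complex.ofReal_ne_zero.mpr ht'
  have hνC : ((ν : ℝ) : ℂ) ≠ 0 := Complex.ofReal_ne_zero.mpr hν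
  set a : ℝ := ν / (4 * t) with hadef
  have ha : a ≠ 0 := div_ne_zero hν (by positivity)
  set y0 : ℝ := (x - 2 * ω * t) / ν with hy0
  set e' : ℝ := (ω + τ / 2 * x) * x - ω ^ 2 * t with he'
  set C : ℂ := (4 * (Real.pi : ℂ) * Complex.I * (t : ℂ)) ^ ((1 : ℂ) / 2) with hC
  set K : ℂ := Complex.exp (Complex.I * ((e' / ν : ℝ) : ℂ)) / C with hK
  set L : ℂ := ((Real.pi : ℂ) / (-((a : ℂ) * Complex.I))) ^ ((1:ℂ)/2) with hL
  -- pointwise exponent identity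
  have hexp : ∀ y : ℝ, Complex.I * (((ω + τ / 2 * y) * y : ℝ) : ℂ)
        + Complex.I * (((x - y) ^ 2 : ℝ) : ℂ) / (4 * (t : ℂ))
      = (a : ℂ) * Complex.I * (((y - y0 : ℝ)) : ℂ) ^ 2 + Complex.I * ((e' / ν : ℝ) : ℂ) := by
    intro y
    have hνC2 : (1:ℂ) + 2 * (τ:ℂ) * (t:ℂ) ≠ 0 := by
      have h : ((ν : ℝ) : ℂ) = 1 + 2 * (τ:ℂ) * (t:ℂ) := by rw [hνdef]; push_cast; ring
      rwa [h] at hνC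
    have hτ : (τ:ℂ) = ((ν:ℂ) - 1) / (2 * t) := by
      rw [hνdef]; push_cast; field_simp; ring
    rw [hadef, hy0, he']
    push_cast
    rw [hτ]
    field_simp
    ring
  have hintegrand : ∀ y : ℝ,
      Complex.exp (Complex.I * (((ω + τ / 2 * y) * y : ℝ) : ℂ)) *
        (Complex.exp (Complex.I * (((x - y) ^ 2 : ℝ) : ℂ) / (4 * (t : ℂ))) / C)
      = K * Complex.exp ((a : ℂ) * Complex.I * (((y - y0 : ℝ)) : ℂ) ^ 2) := by
    intro y
    calc Complex.exp (Complex.I * (((ω + τ / 2 * y) * y : ℝ) : ℂ)) *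
          (Complex.exp (Complex.I * (((x - y) ^ 2 : ℝ) : ℂ) / (4 * (t : ℂ))) / C)
        = Complex.exp (Complex.I * (((ω + τ / 2 * y) * y : ℝ) : ℂ)
            + Complex.I * (((x - y) ^ 2 : ℝ) : ℂ) / (4 * (t : ℂ))) / C := by
          rw [Complex.exp_add]; ring
      _ = Complex.exp ((a : ℂ) * Complex.I * (((y - y0 : ℝ)) : ℂ) ^ 2
            + Complex.I * ((e' / ν : ℝ) : ℂ)) / C := by rw [hexp y]
      _ = K * Complex.exp ((a : ℂ) * Complex.I * (((y - y0 : ℝ)) : ℂ) ^ 2) := by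
          rw [hK, Complex.exp_add]; ring
  have hfun : (fun Rad : ℝ => ∫ y in (-Rad)..Rad,
        Complex.exp (Complex.I * (((ω + τ / 2 * y) * y : ℝ) : ℂ)) *
          (Complex.exp (Complex.I * (((x - y) ^ 2 : ℝ) : ℂ) / (4 * (t : ℂ))) / C))
      = fun Rad : ℝ => K * ∫ u in (-Rad + -y0)..(Rad + -y0),
          Complex.exp ((a : ℂ) * Complex.I * ((u : ℝ) : ℂ) ^ 2) := by
    funext R
    simp_rw [hintegrand]
    rw [intervalIntegral.integral_const_mul]
    congr 1
    rw [show -R + -y0 = -R - y0 by ring, show R + -y0 = R - y0 by ring,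
      ← intervalIntegral.integral_comp_sub_right
        (fun u : ℝ => Complex.exp ((a : ℂ) * Complex.I * ((u : ℝ) : ℂ) ^ 2)) y0]
  rw [hfun]
  have hshift := (fresnel_shift ha (-y0)).const_mul K
  -- identify the limit
  have hsne : ((ν : ℝ) : ℂ) ^ ((1 : ℂ) / 2) ≠ 0 := by
    intro h
    rw [Complex.cpow_eq_zero_iff] at h
    exact hνC h.1
  have hCne : C ≠ 0 := by
    rw [hC]
    intro h
    rw [Complex.cpow_eq_zero_iff] at h
    have := h.1
    apply htC
    have h4 : (4 * (Real.pi : ℂ) * Complex.I) ≠ 0 := by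
      simp [Complex.I_ne_zero, Complex.ofReal_ne_zero.mpr (ne_of_gt Real.pi_pos)]
    exact (mul_eq_zero.mp this).resolve_left h4
  have hLne : L ≠ 0 := by
    rw [hL]
    intro h
    rw [Complex.cpow_eq_zero_iff] at h
    have := h.1
    rw [div_eq_zero_iff] at this
    rcases this with h1 | h1
    · exact Real.pi_ne_zero (by exact_mod_cast h1)
    · rw [neg_eq_zero, mul_eq_zero] at h1
      rcases h1 with h1 | h1
      · exact ha (by exact_mod_cast h1)
      · exact Complex.I_ne_zero h1
  have hident : L * ((ν : ℝ) : ℂ) ^ ((1 : ℂ) / 2) = C := by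
    rw [hL, hC, hadef]
    have := sqrt_const_ident ht hν
    convert this using 3
  have hval : K * L = (((ν : ℝ) : ℂ) ^ ((1 : ℂ) / 2))⁻¹
      * Complex.exp ((Complex.I / ((ν : ℝ) : ℂ)) * ((e' : ℝ) : ℂ)) := by
    rw [hK]
    have harg : Complex.I * ((e' / ν : ℝ) : ℂ) = (Complex.I / ((ν : ℝ) : ℂ)) * ((e' : ℝ) : ℂ) := by
      push_cast
      ring
    rw [harg]
    rw [← hident]
    field_simp
  rw [← hval]
  exact hshift
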